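/- Let Q(X) = max_{γ∈U} q(γ,X), where each q(γ,·) is a quadratic with μI ⪯ A(γ) ⪯ LI for γ ∈ U. Let Ξ ∈ ℝ^{p×k}, define Q_L(Ξ;X) = max_{γ∈U}(q(γ,Ξ) + ⟨∇₂q(γ,Ξ), X−Ξ⟩) + (L/2)‖X−Ξ‖_F², let Q_L*(Ξ) = min_X Q_L(Ξ;X), and suppose X̃ satisfies Q_L(Ξ;X̃) ≤ Q_L*(Ξ) + ε. Set L̃ = L−μ/2, μ̃ = μ/2, κ = L/μ, and g̃ = L̃(Ξ−X̃). Then for all X: Q(X) ≥ Q(X̃) + (1/(2L̃))‖g̃‖_F² + ⟨g̃, X−Ξ⟩ + (μ̃/2)‖X−Ξ‖_F² − 2κε. -/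

import Mathlib

open Matrix

noncomputable def frobSq {p k : ℕ} (X : Matrix (Fin p) (Fin k) ℝ) : ℝ :=
  Matrix.trace (Xᵀ * X)

noncomputable def minner {p k : ℕ} (A B : Matrix (Fin p) (Fin k) ℝ) : ℝ :=
  Matrix.trace (Aᵀ * B)

noncomputable def Aaff {p m : ℕ} (A0 : Matrix (Fin p) (Fin p) ℝ)
    (Ai : Fin m → Matrix (Fin p) (Fin p) ℝ) (γ : Fin m → ℝ) :
    Matrix (Fin p) (Fin p) ℝ :=
  A0 + ∑ i, γ i • Ai i

noncomputable def Baff {p k m : ℕ} (B0 : Matrix (Fin p) (Fin k) ℝ)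
    (Bi : Fin m → Matrix (Fin p) (Fin k) ℝ) (γ : Fin m → ℝ) :
    Matrix (Fin p) (Fin k) ℝ :=
  B0 + ∑ i, γ i • Bi i

noncomputable def caff {m : ℕ} (c0 : ℝ) (ci : Fin m → ℝ) (γ : Fin m → ℝ) : ℝ :=
  c0 + ∑ i, γ i * ci i

/-- `q(γ, X) = (1/2) tr(Xᵀ A(γ) X) + ⟨B(γ), X⟩ + c(γ)`. -/
noncomputable def qfun {p k m : ℕ} (A0 : Matrix (Fin p) (Fin p) ℝ)
    (Ai : Fin m → Matrix (Fin p) (Fin p) ℝ) (B0 : Matrix (Fin p) (Fin k) ℝ)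
    (Bi : Fin m → Matrix (Fin p) (Fin k) ℝ) (c0 : ℝ) (ci : Fin m → ℝ)
    (γ : Fin m → ℝ) (X : Matrix (Fin p) (Fin k) ℝ) : ℝ :=
  1 / 2 * Matrix.trace (Xᵀ * Aaff A0 Ai γ * X) + minner (Baff B0 Bi γ) X + caff c0 ci γ

section helpers
variable {p k : ℕ}

lemma minner_expand (A B : Matrix (Fin p) (Fin k) ℝ) :
    minner A B = ∑ j, ∑ i, A i j * B i j := by
  simp [minner, Matrix.trace, Matrix.diag, Matrix.mul_apply]

lemma minner_comm (A B : Matrix (Fin p) (Fin k) ℝ) : minner A B = minner B A := by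
  simp [minner_expand, mul_comm]

lemma minner_add_right (A B C : Matrix (Fin p) (Fin k) ℝ) :
    minner A (B + C) = minner A B + minner A C := by
  simp [minner_expand, Matrix.add_apply, mul_add, Finset.sum_add_distrib]

lemma minner_smul_right (r : ℝ) (A B : Matrix (Fin p) (Fin k) ℝ) :
    minner A (r • B) = r * minner A B := by
  simp [minner_expand, Matrix.smul_apply, Finset.mul_sum, mul_left_comm]

lemma minner_add_left (A B C : Matrix (Fin p) (Fin k) ℝ) :
    minner (A + B) C = minner A C + minner B C := by
  rw [minner_comm, minner_add_right, minner_comm C A, minner_comm C B]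

lemma minner_smul_left (r : ℝ) (A B : Matrix (Fin p) (Fin k) ℝ) :
    minner (r • A) B = r * minner A B := by
  rw [minner_comm, minner_smul_right, minner_comm]

lemma minner_neg_left (A B : Matrix (Fin p) (Fin k) ℝ) :
    minner (-A) B = -minner A B := by
  rw [show -A = (-1 : ℝ) • A by simp, minner_smul_left]; ring

lemma frobSq_eq_minner (A : Matrix (Fin p) (Fin k) ℝ) : frobSq A = minner A A := rfl

lemma frobSq_nonneg (A : Matrix (Fin p) (Fin k) ℝ) : 0 ≤ frobSq A := by
  rw [frobSq_eq_minner, minner_expand]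
  exact Finset.sum_nonneg fun j _ => Finset.sum_nonneg fun i _ => mul_self_nonneg _

lemma frobSq_add (A B : Matrix (Fin p) (Fin k) ℝ) :
    frobSq (A + B) = frobSq A + 2 * minner A B + frobSq B := by
  rw [frobSq_eq_minner, minner_add_left, minner_add_right, minner_add_right,
    frobSq_eq_minner, frobSq_eq_minner, minner_comm B A]
  ring

lemma frobSq_smul (r : ℝ) (A : Matrix (Fin p) (Fin k) ℝ) :
    frobSq (r • A) = r ^ 2 * frobSq A := by
  rw [frobSq_eq_minner, minner_smul_left, minner_smul_right, frobSq_eq_minner]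
  ring

lemma frobSq_neg (A : Matrix (Fin p) (Fin k) ℝ) : frobSq (-A) = frobSq A := by
  rw [show -A = (-1 : ℝ) • A by simp, frobSq_smul]; ring

lemma frobSq_sub (A B : Matrix (Fin p) (Fin k) ℝ) :
    frobSq (A - B) = frobSq A - 2 * minner A B + frobSq B := by
  rw [sub_eq_add_neg, show -B = (-1 : ℝ) • B by simp, frobSq_add, minner_smul_right,
    frobSq_smul]
  ring

lemma psd_trace {M : Matrix (Fin p) (Fin p) ℝ} (hM : M.PosSemidef)
    (D : Matrix (Fin p) (Fin k) ℝ) : 0 ≤ Matrix.trace (Dᵀ * M * D) := by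
  have h : Matrix.trace (Dᵀ * M * D) =
      ∑ j, dotProduct (star fun i => D i j) (M *ᵥ fun i => D i j) := by
    simp only [Matrix.trace, Matrix.diag, Matrix.mul_apply, Matrix.transpose_apply,
      dotProduct, Matrix.mulVec, star_trivial]
    refine Finset.sum_congr rfl fun j _ => ?_
    simp only [Finset.sum_mul, Finset.mul_sum]
    rw [Finset.sum_comm]
    exact Finset.sum_congr rfl fun i _ => Finset.sum_congr rfl fun l _ => by ring
  rw [h]
  exact Finset.sum_nonneg fun j _ => hM.dotProduct_mulVec_nonneg _

lemma trace_sym_comm {M : Matrix (Fin p) (Fin p) ℝ} (hM : Mᵀ = M)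
    (Y Z : Matrix (Fin p) (Fin k) ℝ) :
    Matrix.trace (Yᵀ * M * Z) = Matrix.trace (Zᵀ * M * Y) := by
  rw [← Matrix.trace_transpose (Yᵀ * M * Z)]
  simp [Matrix.transpose_mul, hM, Matrix.mul_assoc]

lemma q_taylor {M : Matrix (Fin p) (Fin p) ℝ} (hM : Mᵀ = M)
    (B Ξ X : Matrix (Fin p) (Fin k) ℝ) :
    1 / 2 * Matrix.trace (Xᵀ * M * X) + minner B X =
      (1 / 2 * Matrix.trace (Ξᵀ * M * Ξ) + minner B Ξ) +
        minner (M * Ξ + B) (X - Ξ) +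
        1 / 2 * Matrix.trace ((X - Ξ)ᵀ * M * (X - Ξ)) := by
  have key := trace_sym_comm hM X Ξ
  have hMΞ : (M * Ξ)ᵀ = Ξᵀ * M := by rw [Matrix.transpose_mul, hM]
  simp only [minner, Matrix.transpose_sub, Matrix.transpose_add, hMΞ,
    Matrix.sub_mul, Matrix.mul_sub, Matrix.add_mul, Matrix.trace_sub, Matrix.trace_add,
    Matrix.mul_assoc] at *
  linarith

end helpers


lemma g1_scalar (c a : ℝ) (hc : 0 < c) : 1 / (2 * c) * (c ^ 2 * a) = c / 2 * a := by
  field_simp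

lemma lb_scalar (L g mv d : ℝ) (hL : 0 < L)
    (h2 : 0 ≤ (1 / L) ^ 2 * g + 2 * (1 / L * mv) + d) :
    0 ≤ 1 / (2 * L) * g + mv + L / 2 * d := by
  have e : L / 2 * ((1 / L) ^ 2 * g + 2 * (1 / L * mv) + d)
      = 1 / (2 * L) * g + mv + L / 2 * d := by field_simp
  nlinarith [mul_nonneg (le_of_lt (by linarith : (0:ℝ) < L / 2)) h2]

lemma hval_scalar (L μ a b mv ε : ℝ) (hL : 0 < L) (hμ : 0 < μ) :
    (L / 2 * a - L / 2 * ((1 - μ / (2 * L)) ^ 2 * a +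
        2 * ((1 - μ / (2 * L)) * (μ / (2 * L) * mv)) + (μ / (2 * L)) ^ 2 * b) - ε) /
      (μ / (2 * L))
      = (L - μ / 4) * a - (L - μ / 2) * mv - μ / 4 * b - 2 * (L / μ) * ε := by
  have h1 : L ≠ 0 := ne_of_gt hL
  have h2 : μ ≠ 0 := ne_of_gt hμ
  field_simp
  ring

/-- approximate prox-map inequality. -/
theorem stmt_4 {p k m : ℕ} (U : Set (Fin m → ℝ))
    (hU : IsCompact U) (hUne : U.Nonempty) (hUconv : Convex ℝ U)
    (A0 : Matrix (Fin p) (Fin p) ℝ) (Ai : Fin m → Matrix (Fin p) (Fin p) ℝ)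
    (B0 : Matrix (Fin p) (Fin k) ℝ) (Bi : Fin m → Matrix (Fin p) (Fin k) ℝ)
    (c0 : ℝ) (ci : Fin m → ℝ)
    (hA0 : A0ᵀ = A0) (hAi : ∀ i, (Ai i)ᵀ = Ai i)
    (μ L ε : ℝ) (hμ : 0 < μ) (hμL : μ ≤ L) (hε : 0 ≤ ε)
    -- μ I ⪯ A(γ) ⪯ L I for all γ ∈ U
    (hbound : ∀ γ ∈ U, (Aaff A0 Ai γ - μ • (1 : Matrix (Fin p) (Fin p) ℝ)).PosSemidef ∧
      (L • (1 : Matrix (Fin p) (Fin p) ℝ) - Aaff A0 Ai γ).PosSemidef)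
    (Q : Matrix (Fin p) (Fin k) ℝ → ℝ)
    (hQ : ∀ X, Q X = sSup ((fun γ => qfun A0 Ai B0 Bi c0 ci γ X) '' U))
    (Ξ : Matrix (Fin p) (Fin k) ℝ)
    (QL : Matrix (Fin p) (Fin k) ℝ → ℝ)
    -- `Q_L(Ξ; X)`, with `∇₂ q(γ,Ξ) = A(γ) Ξ + B(γ)`
    (hQL : ∀ X, QL X =
      sSup ((fun γ => qfun A0 Ai B0 Bi c0 ci γ Ξ +
        minner (Aaff A0 Ai γ * Ξ + Baff B0 Bi γ) (X - Ξ)) '' U) + L / 2 * frobSq (X - Ξ))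
    (Xt : Matrix (Fin p) (Fin k) ℝ)
    (happrox : QL Xt ≤ (⨅ X, QL X) + ε) :
    ∀ X, Q Xt + (1 / (2 * (L - μ / 2))) * frobSq ((L - μ / 2) • (Ξ - Xt)) +
        minner ((L - μ / 2) • (Ξ - Xt)) (X - Ξ) + (μ / 2) / 2 * frobSq (X - Ξ) -
        2 * (L / μ) * ε ≤ Q X := by
  intro X
  have hL : 0 < L := lt_of_lt_of_le hμ hμL
  have hL' : 0 < L - μ / 2 := by linarith
  set t : ℝ := μ / (2 * L) with htdef
  have ht0 : 0 < t := by positivity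
  have ht1 : t ≤ 1 / 2 := by
    rw [htdef, div_le_iff₀ (by linarith)]; linarith
  -- abbreviations
  set lin : (Fin m → ℝ) → Matrix (Fin p) (Fin k) ℝ → ℝ :=
    fun γ Y => qfun A0 Ai B0 Bi c0 ci γ Ξ +
      minner (Aaff A0 Ai γ * Ξ + Baff B0 Bi γ) (Y - Ξ) with hlin
  set φ : Matrix (Fin p) (Fin k) ℝ → ℝ :=
    fun Y => sSup ((fun γ => lin γ Y) '' U) with hφ
  have hQLφ : ∀ Y, QL Y = φ Y + L / 2 * frobSq (Y - Ξ) := by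
    intro Y
    rw [hQL Y, hφ]
  have hφeq : ∀ Y, φ Y = sSup ((fun γ => lin γ Y) '' U) := by
    intro Y
    rw [hφ]
  -- continuity
  have hAcont : Continuous (fun γ : Fin m → ℝ => Aaff A0 Ai γ) := by
    unfold Aaff
    exact continuous_const.add
      (continuous_finset_sum _ fun i _ => (continuous_apply i).smul continuous_const)
  have hBcont : Continuous (fun γ : Fin m → ℝ => Baff B0 Bi γ) := by
    unfold Baff
    exact continuous_const.add
      (continuous_finset_sum _ fun i _ => (continuous_apply i).smul continuous_const)
  have hccont : Continuous (fun γ : Fin m → ℝ => caff c0 ci γ) := by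
    unfold caff
    exact continuous_const.add
      (continuous_finset_sum _ fun i _ => (continuous_apply i).mul continuous_const)
  have hqcont : ∀ Y, Continuous (fun γ : Fin m → ℝ => qfun A0 Ai B0 Bi c0 ci γ Y) := by
    intro Y
    unfold qfun minner
    exact ((continuous_const.mul
        (((continuous_const.matrix_mul hAcont).matrix_mul continuous_const).matrix_trace)).add
      ((hBcont.matrix_transpose.matrix_mul continuous_const).matrix_trace)).add hccont
  have hlincont : ∀ Y, Continuous (fun γ : Fin m → ℝ => lin γ Y) := by
    intro Y
    rw [hlin]
    exact (hqcont Ξ).add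
      ((((hAcont.matrix_mul continuous_const).add hBcont).matrix_transpose.matrix_mul
        continuous_const).matrix_trace)
  have hbddq : ∀ Y, BddAbove ((fun γ => qfun A0 Ai B0 Bi c0 ci γ Y) '' U) :=
    fun Y => hU.bddAbove_image (hqcont Y).continuousOn
  have hbddlin : ∀ Y, BddAbove ((fun γ => lin γ Y) '' U) :=
    fun Y => hU.bddAbove_image (hlincont Y).continuousOn
  -- symmetric A(γ)
  have hAs : ∀ γ, (Aaff A0 Ai γ)ᵀ = Aaff A0 Ai γ := by
    intro γ
    simp [Aaff, Matrix.transpose_add, Matrix.transpose_sum, Matrix.transpose_smul, hA0, hAi]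
  -- Taylor expansion
  have htay : ∀ γ (Y : Matrix (Fin p) (Fin k) ℝ),
      qfun A0 Ai B0 Bi c0 ci γ Y = lin γ Y +
        1 / 2 * Matrix.trace ((Y - Ξ)ᵀ * Aaff A0 Ai γ * (Y - Ξ)) := by
    intro γ Y
    have h := q_taylor (hAs γ) (Baff B0 Bi γ) Ξ Y
    simp only [qfun, hlin]
    linarith
  -- curvature bounds
  have hlow : ∀ γ ∈ U, ∀ Y, lin γ Y + μ / 2 * frobSq (Y - Ξ) ≤
      qfun A0 Ai B0 Bi c0 ci γ Y := by
    intro γ hγ Y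
    have h1 := psd_trace (hbound γ hγ).1 (Y - Ξ)
    have h2 : Matrix.trace ((Y - Ξ)ᵀ * (Aaff A0 Ai γ - μ • 1) * (Y - Ξ)) =
        Matrix.trace ((Y - Ξ)ᵀ * Aaff A0 Ai γ * (Y - Ξ)) - μ * frobSq (Y - Ξ) := by
      simp only [Matrix.mul_sub, Matrix.sub_mul, Matrix.mul_smul, Matrix.smul_mul,
        Matrix.mul_one, Matrix.trace_sub, Matrix.trace_smul, smul_eq_mul, frobSq,
        Matrix.transpose_sub]
      ring
    rw [htay γ Y]
    linarith
  have hup : ∀ γ ∈ U, ∀ Y, qfun A0 Ai B0 Bi c0 ci γ Y ≤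
      lin γ Y + L / 2 * frobSq (Y - Ξ) := by
    intro γ hγ Y
    have h1 := psd_trace (hbound γ hγ).2 (Y - Ξ)
    have h2 : Matrix.trace ((Y - Ξ)ᵀ * (L • 1 - Aaff A0 Ai γ) * (Y - Ξ)) =
        L * frobSq (Y - Ξ) - Matrix.trace ((Y - Ξ)ᵀ * Aaff A0 Ai γ * (Y - Ξ)) := by
      simp only [Matrix.mul_sub, Matrix.sub_mul, Matrix.mul_smul, Matrix.smul_mul,
        Matrix.mul_one, Matrix.trace_sub, Matrix.trace_smul, smul_eq_mul, frobSq,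
        Matrix.transpose_sub]
      ring
    rw [htay γ Y]
    linarith
  -- F1 : φ Y + μ/2 ‖Y-Ξ‖² ≤ Q Y
  have F1 : ∀ Y, φ Y + μ / 2 * frobSq (Y - Ξ) ≤ Q Y := by
    intro Y
    rw [hQ Y]
    have h : sSup ((fun γ => lin γ Y) '' U) ≤
        sSup ((fun γ => qfun A0 Ai B0 Bi c0 ci γ Y) '' U) - μ / 2 * frobSq (Y - Ξ) := by
      refine csSup_le (hUne.image _) ?_
      rintro _ ⟨γ, hγ, rfl⟩
      show lin γ Y ≤ _
      have h1 := hlow γ hγ Y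
      have h2 : qfun A0 Ai B0 Bi c0 ci γ Y ≤
          sSup ((fun γ => qfun A0 Ai B0 Bi c0 ci γ Y) '' U) :=
        le_csSup (hbddq Y) (Set.mem_image_of_mem (fun γ => qfun A0 Ai B0 Bi c0 ci γ Y) hγ)
      linarith
    linarith [hφeq Y]
  -- F2 : Q Xt ≤ φ Xt + L/2 ‖Xt-Ξ‖²
  have F2 : Q Xt ≤ φ Xt + L / 2 * frobSq (Xt - Ξ) := by
    rw [hQ Xt, hφeq Xt]
    refine csSup_le (hUne.image _) ?_
    rintro _ ⟨γ, hγ, rfl⟩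
    show qfun A0 Ai B0 Bi c0 ci γ Xt ≤ _
    have h1 := hup γ hγ Xt
    have h2 : lin γ Xt ≤ sSup ((fun γ => lin γ Xt) '' U) :=
      le_csSup (hbddlin Xt) (Set.mem_image_of_mem (fun γ => lin γ Xt) hγ)
    exact h1.trans (add_le_add_left h2 _)
  -- the interpolation point
  set Yt : Matrix (Fin p) (Fin k) ℝ := (1 - t) • Xt + t • X with hYt
  have hYtΞ : Yt - Ξ = (1 - t) • (Xt - Ξ) + t • (X - Ξ) := by
    rw [hYt]; module
  -- F3 : convexity of φ
  have F3 : φ Yt ≤ (1 - t) * φ Xt + t * φ X := by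
    refine csSup_le (hUne.image _) ?_
    rintro _ ⟨γ, hγ, rfl⟩
    show lin γ Yt ≤ _
    have haff : lin γ Yt = (1 - t) * lin γ Xt + t * lin γ X := by
      simp only [hlin]
      rw [hYtΞ, minner_add_right, minner_smul_right, minner_smul_right]
      ring
    have h1 : lin γ Xt ≤ sSup ((fun γ => lin γ Xt) '' U) :=
      le_csSup (hbddlin Xt) (Set.mem_image_of_mem (fun γ => lin γ Xt) hγ)
    have h2 : lin γ X ≤ sSup ((fun γ => lin γ X) '' U) :=
      le_csSup (hbddlin X) (Set.mem_image_of_mem (fun γ => lin γ X) hγ)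
    have ht' : (0:ℝ) ≤ 1 - t := by linarith
    rw [haff]
    have h3 := mul_le_mul_of_nonneg_left h1 ht'
    have h4 := mul_le_mul_of_nonneg_left h2 (le_of_lt ht0)
    linarith [hφeq Xt, hφeq X]
  -- QL bounded below
  obtain ⟨γ0, hγ0⟩ := hUne
  set G0 : Matrix (Fin p) (Fin k) ℝ := Aaff A0 Ai γ0 * Ξ + Baff B0 Bi γ0 with hG0
  have hlb : ∀ Y, qfun A0 Ai B0 Bi c0 ci γ0 Ξ - 1 / (2 * L) * frobSq G0 ≤ QL Y := by
    intro Y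
    have h1 : lin γ0 Y ≤ sSup ((fun γ => lin γ Y) '' U) :=
      le_csSup (hbddlin Y) (Set.mem_image_of_mem (fun γ => lin γ Y) hγ0)
    have h2 : (0:ℝ) ≤ frobSq ((1 / L) • G0 + (Y - Ξ)) := frobSq_nonneg _
    rw [frobSq_add, frobSq_smul, minner_smul_left] at h2
    have h5 := lb_scalar L (frobSq G0) (minner G0 (Y - Ξ)) (frobSq (Y - Ξ)) hL h2
    have h4 : lin γ0 Y = qfun A0 Ai B0 Bi c0 ci γ0 Ξ + minner G0 (Y - Ξ) := by
      rw [hlin, hG0]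
    rw [hQLφ Y]
    linarith [hφeq Y]
  have hbddQL : BddBelow (Set.range QL) := by
    refine ⟨qfun A0 Ai B0 Bi c0 ci γ0 Ξ - 1 / (2 * L) * frobSq G0, ?_⟩
    rintro y ⟨Y, rfl⟩
    exact hlb Y
  have ineq0 : QL Xt - ε ≤ QL Yt := by
    have h1 : (⨅ Z, QL Z) ≤ QL Yt := ciInf_le hbddQL Yt
    linarith
  set a : ℝ := frobSq (Xt - Ξ) with ha
  set b : ℝ := frobSq (X - Ξ) with hb
  set mm : ℝ := minner (Xt - Ξ) (X - Ξ) with hmm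
  have e1 : frobSq (Yt - Ξ) = (1 - t) ^ 2 * a + 2 * ((1 - t) * (t * mm)) + t ^ 2 * b := by
    rw [hYtΞ, frobSq_add, frobSq_smul, frobSq_smul, minner_smul_left, minner_smul_right]
  have ineq1 : φ Xt + L / 2 * a - ε ≤ (1 - t) * φ Xt + t * φ X +
      L / 2 * ((1 - t) ^ 2 * a + 2 * ((1 - t) * (t * mm)) + t ^ 2 * b) := by
    have h1 := hQLφ Xt
    have h2 := hQLφ Yt
    rw [e1] at h2
    rw [← ha] at h1
    linarith
  have hS : (L / 2 * a - L / 2 * ((1 - t) ^ 2 * a + 2 * ((1 - t) * (t * mm)) + t ^ 2 * b) - ε) / t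
      ≤ φ X - φ Xt := by
    rw [div_le_iff₀ ht0]
    nlinarith [ineq1]
  rw [htdef] at hS
  have hval := hval_scalar L μ a b mm ε hL hμ
  rw [hval] at hS
  have g1 : 1 / (2 * (L - μ / 2)) * frobSq ((L - μ / 2) • (Ξ - Xt)) = (L - μ / 2) / 2 * a := by
    rw [show Ξ - Xt = -(Xt - Ξ) from (neg_sub Xt Ξ).symm, frobSq_smul, frobSq_neg, ← ha]
    exact g1_scalar (L - μ / 2) a hL'
  have g2 : minner ((L - μ / 2) • (Ξ - Xt)) (X - Ξ) = -((L - μ / 2) * mm) := by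
    rw [show Ξ - Xt = -(Xt - Ξ) from (neg_sub Xt Ξ).symm, minner_smul_left, minner_neg_left,
      ← hmm]
    ring
  rw [g1, g2]
  have hF1 := F1 X
  rw [← hb] at hF1
  linarith [hF1, F2, hS]
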